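/- In the constrained Lasso setup, suppose ‖γ̂ − Γ̂β*‖_∞ ≤ λ/4, suppose Γ̂ satisfies the Lower-RE condition with curvature α > 0 and tolerance τ > 0, and suppose λ ≥ 4 b₁ τ. Then the error vector υ = β̂ − β* satisfies the cone constraint ‖υ_{S^c}‖₁ ≤ 3 ‖υ_S‖₁, and consequently ‖υ‖₁ ≤ 4 ‖υ_S‖₁ ≤ 4 √d₀ ‖υ‖₂. -/
import Mathlib


open MeasureTheory Matrix Finset

/-- Euclidean (ℓ₂) norm of a vector. -/
noncomputable def e2 {ι : Type*} [Fintype ι] (v : ι → ℝ) : ℝ :=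
  Real.sqrt (∑ i, v i ^ 2)

/-- ℓ₁ norm of a vector. -/
noncomputable def l1 {ι : Type*} [Fintype ι] (v : ι → ℝ) : ℝ := ∑ i, |v i|

/-- The constrained Lasso objective `(1/2)βᵀΓ̂β − ⟨γ̂, β⟩ + λ‖β‖₁`. -/
noncomputable def lassoObj {p : ℕ} (Γ : Matrix (Fin p) (Fin p) ℝ)
    (γ : Fin p → ℝ) (lam : ℝ) (β : Fin p → ℝ) : ℝ :=
  (1 / 2 : ℝ) * (β ⬝ᵥ Γ.mulVec β) - γ ⬝ᵥ β + lam * l1 β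

/-- The Lower-RE condition with curvature `α` and tolerance `τ`. -/
def LowerRE {p : ℕ} (Γ : Matrix (Fin p) (Fin p) ℝ) (α τ : ℝ) : Prop :=
  ∀ θ : Fin p → ℝ, α * e2 θ ^ 2 - τ * l1 θ ^ 2 ≤ θ ⬝ᵥ Γ.mulVec θ

/-- Lemma: cone constraint for the constrained Lasso error vector. -/
theorem lasso_cone_constraint
    (p : ℕ) (Γ : Matrix (Fin p) (Fin p) ℝ) (hΓ : Γ.IsSymm)
    (γ : Fin p → ℝ) (lam b₁ : ℝ) (hlam : 0 < lam) (hb₁ : 0 < b₁)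
    (βstar : Fin p → ℝ) (hβstar : l1 βstar ≤ b₁)
    (S : Finset (Fin p)) (hS : ∀ i, i ∈ S ↔ βstar i ≠ 0)
    (d₀ : ℕ) (hd₀ : S.card ≤ d₀)
    (βhat : Fin p → ℝ) (hβhat : l1 βhat ≤ b₁)
    (hmin : ∀ β : Fin p → ℝ, l1 β ≤ b₁ → lassoObj Γ γ lam βhat ≤ lassoObj Γ γ lam β)
    (horacle : ∀ i, |γ i - Γ.mulVec βstar i| ≤ lam / 4)
    (α τ : ℝ) (hα : 0 < α) (hτ : 0 < τ)
    (hRE : LowerRE Γ α τ)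
    (hlamtau : 4 * b₁ * τ ≤ lam) :
    (∑ i ∈ Sᶜ, |βhat i - βstar i|) ≤ 3 * ∑ i ∈ S, |βhat i - βstar i| ∧
    l1 (βhat - βstar) ≤ 4 * ∑ i ∈ S, |βhat i - βstar i| ∧
    4 * (∑ i ∈ S, |βhat i - βstar i|) ≤ 4 * Real.sqrt d₀ * e2 (βhat - βstar) := by
  set υ : Fin p → ℝ := βhat - βstar with hυ
  have hυi : ∀ i, υ i = βhat i - βstar i := fun i => rfl
  set a := ∑ i ∈ S, |βhat i - βstar i| with ha
  set c := ∑ i ∈ Sᶜ, |βhat i - βstar i| with hc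
  have ha0 : 0 ≤ a := Finset.sum_nonneg fun i _ => abs_nonneg _
  have hc0 : 0 ≤ c := Finset.sum_nonneg fun i _ => abs_nonneg _
  -- symmetry of the bilinear form
  have hsym : ∀ x y : Fin p → ℝ, x ⬝ᵥ Γ.mulVec y = y ⬝ᵥ Γ.mulVec x := by
    intro x y
    rw [Matrix.dotProduct_mulVec, ← Matrix.vecMul_transpose, hΓ.eq, dotProduct_comm]
  -- l1 of υ
  have hl1υ : l1 υ = a + c := by
    rw [l1, ha, hc, ← Finset.sum_add_sum_compl S]
    simp [hυ]
  have hl1υ2b : l1 υ ≤ 2 * b₁ := by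
    have : l1 υ ≤ l1 βhat + l1 βstar := by
      rw [l1, l1, l1, ← Finset.sum_add_distrib]
      exact Finset.sum_le_sum fun i _ => (abs_sub (βhat i) (βstar i))
    linarith
  -- basic inequality
  have hbasic := hmin βstar hβstar
  -- expansion
  have hexp : βhat ⬝ᵥ Γ.mulVec βhat
      = υ ⬝ᵥ Γ.mulVec υ + 2 * (υ ⬝ᵥ Γ.mulVec βstar) + βstar ⬝ᵥ Γ.mulVec βstar := by
    have hβh : βhat = υ + βstar := by funext i; simp [hυi]
    rw [hβh, Matrix.mulVec_add, dotProduct_add, add_dotProduct,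
      add_dotProduct, hsym βstar υ]
    ring
  -- cross term bound
  have hcross : |(γ - Γ.mulVec βstar) ⬝ᵥ υ| ≤ lam / 4 * l1 υ := by
    rw [dotProduct]
    calc |∑ i, (γ - Γ.mulVec βstar) i * υ i| ≤ ∑ i, |(γ - Γ.mulVec βstar) i * υ i| :=
          Finset.abs_sum_le_sum_abs _ _
      _ ≤ ∑ i, lam / 4 * |υ i| := by
          refine Finset.sum_le_sum fun i _ => ?_
          rw [abs_mul]
          exact mul_le_mul_of_nonneg_right (horacle i) (abs_nonneg _)
      _ = lam / 4 * l1 υ := by simp [l1, Finset.mul_sum]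
  -- quadratic lower bound
  have hquad : -(τ * l1 υ ^ 2) ≤ υ ⬝ᵥ Γ.mulVec υ := by
    have := hRE υ
    have h2 : 0 ≤ α * e2 υ ^ 2 := by
      have : 0 ≤ e2 υ := Real.sqrt_nonneg _
      positivity
    linarith
  have hτb : τ * l1 υ ^ 2 ≤ lam / 2 * l1 υ := by
    have h1 : 0 ≤ l1 υ := by rw [hl1υ]; linarith
    have h2 : τ * l1 υ ≤ lam / 2 := by nlinarith
    nlinarith
  -- derive key ℓ₁ inequality: l1 βhat ≤ l1 βstar + (1/2) * l1 υ
  have hkey : l1 βhat ≤ l1 βstar + 1 / 2 * l1 υ := by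
    have hdiff : γ ⬝ᵥ βhat - γ ⬝ᵥ βstar = γ ⬝ᵥ υ := by
      rw [← dotProduct_sub]
    have hγυ : (γ - Γ.mulVec βstar) ⬝ᵥ υ = γ ⬝ᵥ υ - (Γ.mulVec βstar) ⬝ᵥ υ :=
      sub_dotProduct _ _ _
    have habs : γ ⬝ᵥ υ - υ ⬝ᵥ Γ.mulVec βstar ≤ lam / 4 * l1 υ := by
      have h1 := le_abs_self ((γ - Γ.mulVec βstar) ⬝ᵥ υ)
      have h3 : (Γ.mulVec βstar) ⬝ᵥ υ = υ ⬝ᵥ Γ.mulVec βstar := dotProduct_comm _ _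
      linarith [hcross]
    rw [lassoObj, lassoObj, hexp] at hbasic
    have hlam' : lam * l1 βhat ≤ lam * (l1 βstar + 1 / 2 * l1 υ) := by linarith
    exact le_of_mul_le_mul_left (by linarith) hlam
  -- support decomposition
  have hβs0 : ∀ i ∈ Sᶜ, βstar i = 0 := by
    intro i hi
    have := (hS i).not
    simp only [Finset.mem_compl] at hi
    by_contra h; exact hi ((hS i).mpr h)
  have hl1βstar : l1 βstar = ∑ i ∈ S, |βstar i| := by
    rw [l1, ← Finset.sum_add_sum_compl S]
    have : ∑ i ∈ Sᶜ, |βstar i| = 0 :=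
      Finset.sum_eq_zero fun i hi => by rw [hβs0 i hi, abs_zero]
    linarith
  have hl1βhat : l1 βhat = (∑ i ∈ S, |βhat i|) + c := by
    rw [l1, ← Finset.sum_add_sum_compl S, hc]
    congr 1
    exact Finset.sum_congr rfl fun i hi => by rw [hβs0 i hi, sub_zero]
  have hStri : l1 βstar - a ≤ ∑ i ∈ S, |βhat i| := by
    rw [hl1βstar, ha, ← Finset.sum_sub_distrib]
    exact Finset.sum_le_sum fun i _ => by
      have := abs_sub_abs_le_abs_sub (βstar i) (βhat i)
      rw [abs_sub_comm] at this
      linarith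
  -- cone constraint
  have hcone : c ≤ 3 * a := by
    rw [hl1βhat, hl1υ] at hkey
    linarith
  refine ⟨hcone, ?_, ?_⟩
  · rw [hl1υ]; linarith
  · -- Cauchy-Schwarz
    have hcs : a ^ 2 ≤ (d₀ : ℝ) * ∑ i, υ i ^ 2 := by
      have h1 : a ^ 2 ≤ (S.card : ℝ) * ∑ i ∈ S, |βhat i - βstar i| ^ 2 := by
        exact sq_sum_le_card_mul_sum_sq
      have h2 : ∑ i ∈ S, |βhat i - βstar i| ^ 2 ≤ ∑ i, υ i ^ 2 := by
        have : ∀ i ∈ S, |βhat i - βstar i| ^ 2 = υ i ^ 2 := fun i _ => by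
          rw [sq_abs, hυi]
        rw [Finset.sum_congr rfl this]
        exact Finset.sum_le_sum_of_subset_of_nonneg (Finset.subset_univ S)
          fun i _ _ => sq_nonneg _
      have h3 : (S.card : ℝ) ≤ (d₀ : ℝ) := by exact_mod_cast hd₀
      nlinarith [Finset.sum_nonneg (s := S) (f := fun i => |βhat i - βstar i| ^ 2)
        fun i _ => sq_nonneg _, Finset.sum_nonneg (s := (Finset.univ : Finset (Fin p)))
        (f := fun i => υ i ^ 2) fun i _ => sq_nonneg _]
    have h4 : a ≤ Real.sqrt ((d₀ : ℝ) * ∑ i, υ i ^ 2) := by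
      rw [show a = Real.sqrt (a ^ 2) from (Real.sqrt_sq ha0).symm]
      exact Real.sqrt_le_sqrt hcs
    rw [Real.sqrt_mul (Nat.cast_nonneg d₀)] at h4
    rw [e2]
    linarith
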